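/- arXiv:1302.1270 — 2 statements merged into one kernel-verified Lean document; each statement's English description precedes it below -/
import Mathlib

section
/- For c ≥ 1, P_FA,CSS(c) ≤ P_FA,LSS, i.e., the cooperative false-alarm probability never exceeds the local sensing false-alarm probability P_FA,LSS = 1 - Q(Δδ/σ + Q⁻¹(β)), where Δδ < 0, σ > 0, 0 ≤ ρ < 1. -/
open Real

/-- The Gaussian tail function `Q(x) = (1/√(2π)) ∫_x^∞ exp(-u²/2) du`. -/
noncomputable def gaussQ (x : ℝ) : ℝ :=
  (Real.sqrt (2 * Real.pi))⁻¹ * ∫ u in Set.Ioi x, Real.exp (-u ^ 2 / 2)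

lemma gaussQ_anti : Antitone gaussQ := by
  intro x y hxy
  unfold gaussQ
  have hI : MeasureTheory.IntegrableOn (fun u : ℝ => Real.exp (-u ^ 2 / 2))
      (Set.Ioi x) := by
    have : MeasureTheory.Integrable (fun u : ℝ => Real.exp (-(1/2) * u ^ 2)) :=
      integrable_exp_neg_mul_sq (by norm_num)
    have h := this.integrableOn (s := Set.Ioi x)
    refine h.congr_fun (fun u _ => by ring_nf) measurableSet_Ioi
  refine mul_le_mul_of_nonneg_left ?_ (by positivity)
  refine MeasureTheory.setIntegral_mono_set hI ?_ ?_
  · exact Filter.Eventually.of_forall fun u => (Real.exp_pos _).le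
  · exact Filter.Eventually.of_forall (Set.Ioi_subset_Ioi hxy)

/-- For `c ≥ 1`, the cooperative false-alarm probability never exceeds the
local sensing false-alarm probability: `P_FA,CSS(c) ≤ P_FA,LSS`. -/
theorem Pfa_CSS_le_Pfa_LSS (Δδ σ ρ Qinvβ : ℝ)
    (hΔδ : Δδ < 0) (hσ : 0 < σ) (hρ0 : 0 ≤ ρ) (hρ1 : ρ < 1) :
    ∀ c : ℝ, 1 ≤ c →
      1 - gaussQ (Δδ / σ * Real.sqrt (((1 - ρ) * c + 2 * ρ) / (1 + ρ)) + Qinvβ)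
        ≤ 1 - gaussQ (Δδ / σ + Qinvβ) := by
  intro c hc
  have hρ1' : (0:ℝ) < 1 + ρ := by linarith
  have hs : (1:ℝ) ≤ ((1 - ρ) * c + 2 * ρ) / (1 + ρ) := by
    rw [le_div_iff₀ hρ1']
    nlinarith
  have hsqrt : (1:ℝ) ≤ Real.sqrt (((1 - ρ) * c + 2 * ρ) / (1 + ρ)) := by
    have := Real.sqrt_le_sqrt hs
    simpa using this
  have hq : Δδ / σ < 0 := div_neg_of_neg_of_pos hΔδ hσ
  have hx : Δδ / σ * Real.sqrt (((1 - ρ) * c + 2 * ρ) / (1 + ρ)) + Qinvβ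
      ≤ Δδ / σ + Qinvβ := by
    have := mul_le_mul_of_nonpos_left hsqrt hq.le
    linarith [this]
  have := gaussQ_anti hx
  linarith
end

section
/- The term √(((1-ρ)c + 2ρ)/(1+ρ)) is strictly decreasing in ρ ∈ [0,1) for each fixed c > 1, and consequently P_FA,CSS(c) = 1 - Q((Δδ/σ)·√(((1-ρ)c+2ρ)/(1+ρ)) + Q⁻¹(β)) is increasing in ρ when Δδ < 0. -/
open Real

lemma gauss_integrable : MeasureTheory.Integrable (fun u : ℝ => Real.exp (-u ^ 2 / 2)) := by
  have h := integrable_exp_neg_mul_sq (b := (1/2 : ℝ)) (by norm_num)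
  convert h using 2 with u
  ring_nf

lemma gaussQ_strictAnti : StrictAnti gaussQ := by
  intro a b hab
  unfold gaussQ
  have hpos : 0 < (Real.sqrt (2 * Real.pi))⁻¹ := by
    positivity
  have hint : ∀ s : Set ℝ, MeasureTheory.IntegrableOn
      (fun u : ℝ => Real.exp (-u ^ 2 / 2)) s := fun s =>
    gauss_integrable.integrableOn
  have hsplit : (∫ u in Set.Ioi a, Real.exp (-u ^ 2 / 2)) =
      (∫ u in Set.Ioc a b, Real.exp (-u ^ 2 / 2)) +
      (∫ u in Set.Ioi b, Real.exp (-u ^ 2 / 2)) := by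
    rw [← MeasureTheory.setIntegral_union (Set.Ioc_disjoint_Ioi le_rfl)
      measurableSet_Ioi (hint _) (hint _), Set.Ioc_union_Ioi_eq_Ioi hab.le]
  have hmid : 0 < ∫ u in Set.Ioc a b, Real.exp (-u ^ 2 / 2) := by
    rw [← intervalIntegral.integral_of_le hab.le]
    apply intervalIntegral.intervalIntegral_pos_of_pos_on
    · exact gauss_integrable.intervalIntegrable
    · intro x _; positivity
    · exact hab
  have : (∫ u in Set.Ioi b, Real.exp (-u ^ 2 / 2)) <
      (∫ u in Set.Ioi a, Real.exp (-u ^ 2 / 2)) := by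
    rw [hsplit]; linarith
  exact mul_lt_mul_of_pos_left this hpos

/-- For fixed `c > 1`, the term `√(((1-ρ)c + 2ρ)/(1+ρ))` is strictly decreasing
in `ρ ∈ [0,1)`, and consequently (for `Δδ < 0`)
`P_FA,CSS(c) = 1 - Q((Δδ/σ)·√(((1-ρ)c+2ρ)/(1+ρ)) + Q⁻¹(β))` is increasing in `ρ`. -/
theorem Pfa_increasing_in_correlation (Δδ σ Qinvβ c : ℝ)
    (hΔδ : Δδ < 0) (hσ : 0 < σ) (hc : 1 < c) :
    StrictAntiOn (fun ρ : ℝ => Real.sqrt (((1 - ρ) * c + 2 * ρ) / (1 + ρ)))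
      (Set.Ico (0 : ℝ) 1) ∧
    StrictMonoOn
      (fun ρ : ℝ =>
        1 - gaussQ (Δδ / σ * Real.sqrt (((1 - ρ) * c + 2 * ρ) / (1 + ρ)) + Qinvβ))
      (Set.Ico (0 : ℝ) 1) := by
  have key : StrictAntiOn (fun ρ : ℝ => Real.sqrt (((1 - ρ) * c + 2 * ρ) / (1 + ρ)))
      (Set.Ico (0 : ℝ) 1) := by
    intro x hx y hy hxy
    have hx0 : (0:ℝ) ≤ x := hx.1
    have hy1 : y < 1 := hy.2
    have hdx : (0:ℝ) < 1 + x := by linarith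
    have hdy : (0:ℝ) < 1 + y := by linarith
    have hnum : (0:ℝ) ≤ (1 - y) * c + 2 * y := by nlinarith
    apply Real.sqrt_lt_sqrt (div_nonneg hnum hdy.le)
    rw [div_lt_div_iff₀ hdy hdx]
    nlinarith
  refine ⟨key, ?_⟩
  intro x hx y hy hxy
  have hs := key hx hy hxy
  have hq : Δδ / σ < 0 := div_neg_of_neg_of_pos hΔδ hσ
  have harg : Δδ / σ * Real.sqrt (((1 - x) * c + 2 * x) / (1 + x)) + Qinvβ <
      Δδ / σ * Real.sqrt (((1 - y) * c + 2 * y) / (1 + y)) + Qinvβ := by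
    have := mul_lt_mul_of_neg_left hs hq
    linarith
  have := gaussQ_strictAnti harg
  simp only
  linarith
end
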